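/- Let P ≥ 1 be an integer and m ∈ (-1,1) with m ≠ 0 or arbitrary m ∈ (-1,1). Define G⁺_{μν} = -(1-m)^{P+μ-1} - (1-m)^{P+ν-1} + ((3-m)/(2-m))(1-m)^{μ+ν-1} and α⁺ = ((2-m)/(3-m))(1-m)^P. Then for all 1 ≤ μ, ν ≤ P the identity G⁺_{μν} = ((3-m)/((2-m)(1-m)))·((1-m)^μ - α⁺)·((1-m)^ν - α⁺) - α⁺(1-m)^{P-1} holds. -/
import Mathlib

/-- Absolute-position coefficient
`G⁺_{μν} = -(1-m)^{P+μ-1} - (1-m)^{P+ν-1} + ((3-m)/(2-m))(1-m)^{μ+ν-1}`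
(one-based indices). -/
noncomputable def Gplus (P : ℕ) (m : ℝ) (μ ν : ℕ) : ℝ :=
  -(1 - m) ^ (P + μ - 1) - (1 - m) ^ (P + ν - 1)
    + ((3 - m) / (2 - m)) * (1 - m) ^ (μ + ν - 1)

/-- Factorized form of `G⁺` with `α⁺ = ((2-m)/(3-m))(1-m)^P`. -/
theorem Gplus_factorized
    (P : ℕ) (hP : 1 ≤ P) (m : ℝ) (hm : -1 < m) (hm' : m < 1) :
    ∀ μ ν : ℕ, 1 ≤ μ → μ ≤ P → 1 ≤ ν → ν ≤ P →
      Gplus P m μ ν =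
        ((3 - m) / ((2 - m) * (1 - m))) *
            ((1 - m) ^ μ - ((2 - m) / (3 - m)) * (1 - m) ^ P) *
            ((1 - m) ^ ν - ((2 - m) / (3 - m)) * (1 - m) ^ P)
          - (((2 - m) / (3 - m)) * (1 - m) ^ P) * (1 - m) ^ (P - 1) := by
  intro μ ν hμ hμP hν hνP
  obtain ⟨P', rfl⟩ := Nat.exists_eq_add_of_le hP
  obtain ⟨μ', rfl⟩ := Nat.exists_eq_add_of_le hμ
  obtain ⟨ν', rfl⟩ := Nat.exists_eq_add_of_le hν
  have h1 : (1 : ℝ) - m ≠ 0 := by linarith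
  have h2 : (2 : ℝ) - m ≠ 0 := by linarith
  have h3 : (3 : ℝ) - m ≠ 0 := by linarith
  unfold Gplus
  have e1 : 1 + P' + (1 + μ') - 1 = P' + μ' + 1 := by omega
  have e2 : 1 + P' + (1 + ν') - 1 = P' + ν' + 1 := by omega
  have e3 : 1 + μ' + (1 + ν') - 1 = μ' + ν' + 1 := by omega
  have e4 : 1 + P' - 1 = P' := by omega
  rw [e1, e2, e3, e4]
  simp only [pow_add, pow_succ, pow_one]
  field_simp
  ring
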